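/- arXiv:2503.10929 — 3 statements merged into one kernel-verified Lean document; each statement's English description precedes it below -/
import Mathlib

section
/- FKG-type covariance inequality: Let X, ε, η be mutually independent real random variables, and let g, h: R² → R be measurable functions, each non-decreasing in its first argument, with g(X,ε) and h(X,η) having finite second moments. Then Cov(g(X,ε), h(X,η)) ≥ 0. -/
open MeasureTheory ProbabilityTheory

noncomputable section

/-- Covariance of two real random variables. -/
def cov {Ω : Type*} [MeasurableSpace Ω] (μ : Measure Ω) (U V : Ω → ℝ) : ℝ :=
  (∫ ω, U ω * V ω ∂μ) - (∫ ω, U ω ∂μ) * (∫ ω, V ω ∂μ)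

/-- The second-moment (Gram) matrix `E[X Xᵀ]`. -/
def gram {Ω : Type*} [MeasurableSpace Ω] (μ : Measure Ω) {n : ℕ} (X : Ω → Fin n → ℝ) :
    Matrix (Fin n) (Fin n) ℝ :=
  Matrix.of fun i j => ∫ ω, X ω i * X ω j ∂μ

/-- The coefficient vector `E[X Xᵀ]⁻¹ E[X W]` of the L² projection of `W` on `X`. -/
def projCoef {Ω : Type*} [MeasurableSpace Ω] (μ : Measure Ω) {n : ℕ}
    (X : Ω → Fin n → ℝ) (W : Ω → ℝ) : Fin n → ℝ :=
  (gram μ X)⁻¹.mulVec fun i => ∫ ω, X ω i * W ω ∂μ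

/-- The projection residual `W_⊥ = W − Xᵀ E[X Xᵀ]⁻¹ E[X W]`. -/
def resid {Ω : Type*} [MeasurableSpace Ω] (μ : Measure Ω) {n : ℕ}
    (X : Ω → Fin n → ℝ) (W : Ω → ℝ) : Ω → ℝ :=
  fun ω => W ω - ∑ j, X ω j * projCoef μ X W j
section Aux

open MeasureTheory

/-- Chebyshev-type: a.e. "same-ordering" functions have nonnegative covariance. -/
lemma key_chebyshev (α : Measure ℝ) [IsProbabilityMeasure α] {G H : ℝ → ℝ}
    (hG1 : Integrable G α) (hH1 : Integrable H α)
    (hGH : Integrable (fun x => G x * H x) α)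
    (hmono : ∀ᵐ p ∂(α.prod α), 0 ≤ (G p.1 - G p.2) * (H p.1 - H p.2)) :
    (∫ x, G x ∂α) * (∫ x, H x ∂α) ≤ ∫ x, G x * H x ∂α := by
  have i1 : Integrable (fun p : ℝ × ℝ => G p.1 * H p.1) (α.prod α) := by
    simpa using hGH.mul_prod (integrable_const (1 : ℝ))
  have i2 : Integrable (fun p : ℝ × ℝ => G p.2 * H p.2) (α.prod α) := by
    simpa using (integrable_const (1 : ℝ)).mul_prod hGH
  have i3 : Integrable (fun p : ℝ × ℝ => G p.1 * H p.2) (α.prod α) := hG1.mul_prod hH1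
  have i4 : Integrable (fun p : ℝ × ℝ => G p.2 * H p.1) (α.prod α) := by
    have := hH1.mul_prod hG1
    simpa [mul_comm] using this
  have h0 : 0 ≤ ∫ p, (G p.1 - G p.2) * (H p.1 - H p.2) ∂(α.prod α) :=
    integral_nonneg_of_ae hmono
  have hexp : (fun p : ℝ × ℝ => (G p.1 - G p.2) * (H p.1 - H p.2)) =
      fun p : ℝ × ℝ => (G p.1 * H p.1 + G p.2 * H p.2) - (G p.1 * H p.2 + G p.2 * H p.1) := by
    funext p; ring
  have i12 : Integrable (fun p : ℝ × ℝ => G p.1 * H p.1 + G p.2 * H p.2) (α.prod α) := i1.add i2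
  have i34 : Integrable (fun p : ℝ × ℝ => G p.1 * H p.2 + G p.2 * H p.1) (α.prod α) := i3.add i4
  rw [hexp, integral_sub i12 i34, integral_add i1 i2, integral_add i3 i4] at h0
  have e1 : ∫ p : ℝ × ℝ, G p.1 * H p.1 ∂(α.prod α) = ∫ x, G x * H x ∂α := by
    simpa using integral_prod_mul (μ := α) (ν := α) (fun x => G x * H x) (fun _ => (1 : ℝ))
  have e2 : ∫ p : ℝ × ℝ, G p.2 * H p.2 ∂(α.prod α) = ∫ x, G x * H x ∂α := by
    simpa using integral_prod_mul (μ := α) (ν := α) (fun _ => (1 : ℝ)) (fun x => G x * H x)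
  have e3 : ∫ p : ℝ × ℝ, G p.1 * H p.2 ∂(α.prod α) = (∫ x, G x ∂α) * ∫ x, H x ∂α :=
    integral_prod_mul G H
  have e4 : ∫ p : ℝ × ℝ, G p.2 * H p.1 ∂(α.prod α) = (∫ x, G x ∂α) * ∫ x, H x ∂α := by
    have := integral_prod_mul (μ := α) (ν := α) H G
    rw [mul_comm] at this
    rw [← this]
    congr 1; funext p; ring
  rw [e1, e2, e3, e4] at h0
  linarith

end Aux

/-- FKG-type covariance inequality: for mutually independent
`X, ε, η` and functions `g, h` non-decreasing in the first argument,
`Cov(g(X,ε), h(X,η)) ≥ 0`. -/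
theorem stmt5 {Ω : Type*} [MeasurableSpace Ω] (μ : Measure Ω) [IsProbabilityMeasure μ]
    (X ε η : Ω → ℝ)
    (hXm : Measurable X) (hεm : Measurable ε) (hηm : Measurable η)
    (hindep : iIndepFun ![X, ε, η] μ)
    (g h : ℝ → ℝ → ℝ)
    (hgm : Measurable fun p : ℝ × ℝ => g p.1 p.2)
    (hhm : Measurable fun p : ℝ × ℝ => h p.1 p.2)
    (hgmono : ∀ e, Monotone fun x => g x e)
    (hhmono : ∀ e, Monotone fun x => h x e)
    (hg2 : MemLp (fun ω => g (X ω) (ε ω)) 2 μ)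
    (hh2 : MemLp (fun ω => h (X ω) (η ω)) 2 μ) :
    0 ≤ cov μ (fun ω => g (X ω) (ε ω)) (fun ω => h (X ω) (η ω)) := by
  classical
  set α : Measure ℝ := μ.map X with hα
  set β : Measure ℝ := μ.map ε with hβ
  set γ : Measure ℝ := μ.map η with hγ
  haveI : IsProbabilityMeasure α := Measure.isProbabilityMeasure_map hXm.aemeasurable
  haveI : IsProbabilityMeasure β := Measure.isProbabilityMeasure_map hεm.aemeasurable
  haveI : IsProbabilityMeasure γ := Measure.isProbabilityMeasure_map hηm.aemeasurable
  have hmeas : ∀ i, Measurable (![X, ε, η] i) := by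
    intro i; fin_cases i <;> simpa
  -- independence facts
  have hXε : IndepFun X ε μ := by
    simpa using hindep.indepFun (show (0 : Fin 3) ≠ 1 by decide)
  have hXη : IndepFun X η μ := by
    simpa using hindep.indepFun (show (0 : Fin 3) ≠ 2 by decide)
  have hεη : IndepFun ε η μ := by
    simpa using hindep.indepFun (show (1 : Fin 3) ≠ 2 by decide)
  have hX_εη : IndepFun X (fun ω => (ε ω, η ω)) μ := by
    have := hindep.indepFun_prodMk hmeas 1 2 0 (by decide) (by decide)
    simpa using this.symm
  -- distribution identities
  have mXε : μ.map (fun ω => (X ω, ε ω)) = α.prod β :=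
    (indepFun_iff_map_prod_eq_prod_map_map hXm.aemeasurable hεm.aemeasurable).mp hXε
  have mXη : μ.map (fun ω => (X ω, η ω)) = α.prod γ :=
    (indepFun_iff_map_prod_eq_prod_map_map hXm.aemeasurable hηm.aemeasurable).mp hXη
  have mεη : μ.map (fun ω => (ε ω, η ω)) = β.prod γ :=
    (indepFun_iff_map_prod_eq_prod_map_map hεm.aemeasurable hηm.aemeasurable).mp hεη
  have mtriple : μ.map (fun ω => (X ω, ε ω, η ω)) = α.prod (β.prod γ) := by
    have := (indepFun_iff_map_prod_eq_prod_map_map hXm.aemeasurable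
      (hεm.prodMk hηm).aemeasurable).mp hX_εη
    rw [this, mεη]
  -- measurability of the triple integrand
  have hFm : Measurable (fun q : ℝ × ℝ × ℝ => g q.1 q.2.1 * h q.1 q.2.2) := by
    exact (hgm.comp (measurable_fst.prodMk (measurable_fst.comp measurable_snd))).mul
      (hhm.comp (measurable_fst.prodMk (measurable_snd.comp measurable_snd)))
  -- integrability of pieces on μ
  have hgint : Integrable (fun ω => g (X ω) (ε ω)) μ := hg2.integrable one_le_two
  have hhint : Integrable (fun ω => h (X ω) (η ω)) μ := hh2.integrable one_le_two
  have hghint : Integrable (fun ω => g (X ω) (ε ω) * h (X ω) (η ω)) μ := by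
    have := (hh2.smul hg2 (r := 1)).integrable le_rfl
    simpa [smul_eq_mul, Pi.mul_def] using this
  -- transfer integrability to product measures
  have Ig : Integrable (fun p : ℝ × ℝ => g p.1 p.2) (α.prod β) := by
    rw [← mXε]
    exact (integrable_map_measure hgm.aestronglyMeasurable
      (hXm.prodMk hεm).aemeasurable).mpr hgint
  have Ih : Integrable (fun p : ℝ × ℝ => h p.1 p.2) (α.prod γ) := by
    rw [← mXη]
    exact (integrable_map_measure hhm.aestronglyMeasurable
      (hXm.prodMk hηm).aemeasurable).mpr hhint
  have Igh : Integrable (fun q : ℝ × ℝ × ℝ => g q.1 q.2.1 * h q.1 q.2.2) (α.prod (β.prod γ)) := by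
    rw [← mtriple]
    exact (integrable_map_measure hFm.aestronglyMeasurable
      (hXm.prodMk (hεm.prodMk hηm)).aemeasurable).mpr hghint
  -- the conditional means
  set G : ℝ → ℝ := fun x => ∫ e, g x e ∂β with hG
  set H : ℝ → ℝ := fun x => ∫ n, h x n ∂γ with hH
  have hG1 : Integrable G α := Ig.integral_prod_left
  have hH1 : Integrable H α := Ih.integral_prod_left
  have hinner : ∀ x : ℝ, (∫ q : ℝ × ℝ, g x q.1 * h x q.2 ∂(β.prod γ)) = G x * H x := fun x =>
    integral_prod_mul (fun e => g x e) (fun n => h x n)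
  have hGH : Integrable (fun x => G x * H x) α := by
    refine Igh.integral_prod_left.congr (Filter.Eventually.of_forall fun x => ?_)
    exact hinner x
  -- integral transfers
  have E1 : ∫ ω, g (X ω) (ε ω) ∂μ = ∫ x, G x ∂α := by
    rw [hG, ← integral_prod _ Ig, ← mXε,
      integral_map (hXm.prodMk hεm).aemeasurable hgm.aestronglyMeasurable]
  have E2 : ∫ ω, h (X ω) (η ω) ∂μ = ∫ x, H x ∂α := by
    rw [hH, ← integral_prod _ Ih, ← mXη,
      integral_map (hXm.prodMk hηm).aemeasurable hhm.aestronglyMeasurable]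
  have E3 : ∫ ω, g (X ω) (ε ω) * h (X ω) (η ω) ∂μ = ∫ x, G x * H x ∂α := by
    have step1 : ∫ ω, g (X ω) (ε ω) * h (X ω) (η ω) ∂μ
        = ∫ q : ℝ × ℝ × ℝ, g q.1 q.2.1 * h q.1 q.2.2 ∂(α.prod (β.prod γ)) := by
      rw [← mtriple,
        integral_map (hXm.prodMk (hεm.prodMk hηm)).aemeasurable hFm.aestronglyMeasurable]
    rw [step1, integral_prod _ Igh]
    exact integral_congr_ae (Filter.Eventually.of_forall fun x => hinner x)
  -- a.e. slice integrability
  have hae_g : ∀ᵐ x ∂α, Integrable (fun e => g x e) β := Ig.prod_right_ae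
  have hae_h : ∀ᵐ x ∂α, Integrable (fun n => h x n) γ := Ih.prod_right_ae
  have hA : ∀ᵐ x ∂α, Integrable (fun e => g x e) β ∧ Integrable (fun n => h x n) γ :=
    hae_g.and hae_h
  have hA1 : ∀ᵐ p ∂(α.prod α),
      Integrable (fun e => g p.1 e) β ∧ Integrable (fun n => h p.1 n) γ :=
    (Measure.quasiMeasurePreserving_fst (μ := α) (ν := α)).ae hA
  have hA2 : ∀ᵐ p ∂(α.prod α),
      Integrable (fun e => g p.2 e) β ∧ Integrable (fun n => h p.2 n) γ :=
    (Measure.quasiMeasurePreserving_snd (μ := α) (ν := α)).ae hA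
  have hmono : ∀ᵐ p ∂(α.prod α), 0 ≤ (G p.1 - G p.2) * (H p.1 - H p.2) := by
    filter_upwards [hA1, hA2] with p h1 h2
    rcases le_total p.1 p.2 with hle | hle
    · have hGle : G p.1 ≤ G p.2 := integral_mono h1.1 h2.1 fun e => hgmono e hle
      have hHle : H p.1 ≤ H p.2 := integral_mono h1.2 h2.2 fun n => hhmono n hle
      have h' : (G p.1 - G p.2) * (H p.1 - H p.2) = (G p.2 - G p.1) * (H p.2 - H p.1) := by ring
      rw [h']
      exact mul_nonneg (sub_nonneg.2 hGle) (sub_nonneg.2 hHle)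
    · have hGle : G p.2 ≤ G p.1 := integral_mono h2.1 h1.1 fun e => hgmono e hle
      have hHle : H p.2 ≤ H p.1 := integral_mono h2.2 h1.2 fun n => hhmono n hle
      exact mul_nonneg (sub_nonneg.2 hGle) (sub_nonneg.2 hHle)
  have key := key_chebyshev α hG1 hH1 hGH hmono
  unfold cov
  rw [E1, E2, E3]
  linarith


end
end

section
/- Let X, ε, η be mutually independent real random variables, and let g, h: R² → R be measurable with g non-decreasing in its first argument and h non-increasing in its first argument, both with finite second moments when evaluated at (X,ε) and (X,η) respectively. Then Cov(g(X,ε), h(X,η)) ≤ 0. -/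
open MeasureTheory ProbabilityTheory

noncomputable section

/-- FKG-type covariance inequality: for mutually independent
`X, ε, η` and functions `g, h` `g` non-decreasing and `h` non-increasing in the first argument,
`Cov(g(X,ε), h(X,η)) ≤ 0`. -/
theorem stmt6 {Ω : Type*} [MeasurableSpace Ω] (μ : Measure Ω) [IsProbabilityMeasure μ]
    (X ε η : Ω → ℝ)
    (hXm : Measurable X) (hεm : Measurable ε) (hηm : Measurable η)
    (hindep : iIndepFun ![X, ε, η] μ)
    (g h : ℝ → ℝ → ℝ)
    (hgm : Measurable fun p : ℝ × ℝ => g p.1 p.2)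
    (hhm : Measurable fun p : ℝ × ℝ => h p.1 p.2)
    (hgmono : ∀ e, Monotone fun x => g x e)
    (hhmono : ∀ e, Antitone fun x => h x e)
    (hg2 : MemLp (fun ω => g (X ω) (ε ω)) 2 μ)
    (hh2 : MemLp (fun ω => h (X ω) (η ω)) 2 μ) :
    cov μ (fun ω => g (X ω) (ε ω)) (fun ω => h (X ω) (η ω)) ≤ 0 := by
  classical
  -- laws of the random variables
  set ν : Measure ℝ := μ.map X with hνdef
  set νe : Measure ℝ := μ.map ε with hνedef
  set νn : Measure ℝ := μ.map η with hνndef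
  haveI : IsProbabilityMeasure ν := Measure.isProbabilityMeasure_map hXm.aemeasurable
  haveI : IsProbabilityMeasure νe := Measure.isProbabilityMeasure_map hεm.aemeasurable
  haveI : IsProbabilityMeasure νn := Measure.isProbabilityMeasure_map hηm.aemeasurable
  have hmeas : ∀ i, Measurable (![X, ε, η] i) := by
    intro i; fin_cases i <;> assumption
  have hXε : IndepFun X ε μ := by
    have := hindep.indepFun (i := 0) (j := 1) (by decide)
    simpa using this
  have hXη : IndepFun X η μ := by
    have := hindep.indepFun (i := 0) (j := 2) (by decide)
    simpa using this
  have hεη : IndepFun ε η μ := by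
    have := hindep.indepFun (i := 1) (j := 2) (by decide)
    simpa using this
  have hXp : IndepFun X (fun ω => (ε ω, η ω)) μ := by
    have := (hindep.indepFun_prodMk hmeas 1 2 0 (by decide) (by decide)).symm
    simpa using this
  have mXε : μ.map (fun ω => (X ω, ε ω)) = ν.prod νe :=
    (indepFun_iff_map_prod_eq_prod_map_map hXm.aemeasurable hεm.aemeasurable).mp hXε
  have mXη : μ.map (fun ω => (X ω, η ω)) = ν.prod νn :=
    (indepFun_iff_map_prod_eq_prod_map_map hXm.aemeasurable hηm.aemeasurable).mp hXη
  have mεη : μ.map (fun ω => (ε ω, η ω)) = νe.prod νn :=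
    (indepFun_iff_map_prod_eq_prod_map_map hεm.aemeasurable hηm.aemeasurable).mp hεη
  have mT : μ.map (fun ω => (X ω, (ε ω, η ω))) = ν.prod (νe.prod νn) := by
    rw [(indepFun_iff_map_prod_eq_prod_map_map hXm.aemeasurable
      (hεm.prodMk hηm).aemeasurable).mp hXp, mεη]
  set π : Measure (ℝ × (ℝ × ℝ)) := ν.prod (νe.prod νn) with hπdef
  -- transfer MemLp to the laws
  have hg2' : MemLp (fun p : ℝ × ℝ => g p.1 p.2) 2 (ν.prod νe) := by
    rw [← mXε]
    exact (memLp_map_measure_iff hgm.aestronglyMeasurable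
      (hXm.prodMk hεm).aemeasurable).mpr hg2
  have hh2' : MemLp (fun p : ℝ × ℝ => h p.1 p.2) 2 (ν.prod νn) := by
    rw [← mXη]
    exact (memLp_map_measure_iff hhm.aestronglyMeasurable
      (hXm.prodMk hηm).aemeasurable).mpr hh2
  -- transfer MemLp to the triple-product law
  have mapT1 : π.map (Prod.map id Prod.fst) = ν.prod νe := by
    rw [hπdef, ← Measure.map_prod_map _ _ measurable_id measurable_fst]
    simp
  have mapT2 : π.map (Prod.map id Prod.snd) = ν.prod νn := by
    rw [hπdef, ← Measure.map_prod_map _ _ measurable_id measurable_snd]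
    simp
  have hg2π : MemLp (fun z : ℝ × (ℝ × ℝ) => g z.1 z.2.1) 2 π := by
    have h' : MemLp (fun p : ℝ × ℝ => g p.1 p.2) 2 (π.map (Prod.map id Prod.fst)) := by
      rw [mapT1]; exact hg2'
    exact (memLp_map_measure_iff hgm.aestronglyMeasurable
      (measurable_id.prodMap measurable_fst).aemeasurable).mp h'
  have hh2π : MemLp (fun z : ℝ × (ℝ × ℝ) => h z.1 z.2.2) 2 π := by
    have h' : MemLp (fun p : ℝ × ℝ => h p.1 p.2) 2 (π.map (Prod.map id Prod.snd)) := by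
      rw [mapT2]; exact hh2'
    exact (memLp_map_measure_iff hhm.aestronglyMeasurable
      (measurable_id.prodMap measurable_snd).aemeasurable).mp h'
  have h22 : (1 : ENNReal) / 1 = 1 / 2 + 1 / 2 := by
    rw [one_div_one, ENNReal.add_halves]
  have hFint : Integrable (fun z : ℝ × (ℝ × ℝ) => g z.1 z.2.1 * h z.1 z.2.2) π := by
    have := (MemLp.smul (r := 1) hh2π hg2π).integrable le_rfl
    exact this
  -- the conditional means
  set G : ℝ → ℝ := fun x => ∫ e, g x e ∂νe with hGdef
  set H : ℝ → ℝ := fun x => ∫ n, h x n ∂νn with hHdef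
  have hgInt : Integrable (fun p : ℝ × ℝ => g p.1 p.2) (ν.prod νe) :=
    hg2'.integrable one_le_two
  have hhInt : Integrable (fun p : ℝ × ℝ => h p.1 p.2) (ν.prod νn) :=
    hh2'.integrable one_le_two
  have hGint : Integrable G ν := hgInt.integral_prod_left
  have hHint : Integrable H ν := hhInt.integral_prod_left
  have hGH : Integrable (fun x => G x * H x) ν := by
    refine hFint.integral_prod_left.congr (ae_of_all _ fun x => ?_)
    exact integral_prod_mul (fun e => g x e) (fun n => h x n)
  -- identification of the moments
  have hEUV : ∫ ω, g (X ω) (ε ω) * h (X ω) (η ω) ∂μ = ∫ x, G x * H x ∂ν := by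
    have hFm : AEStronglyMeasurable (fun z : ℝ × (ℝ × ℝ) => g z.1 z.2.1 * h z.1 z.2.2)
        (μ.map (fun ω => (X ω, (ε ω, η ω)))) := by
      rw [mT]; exact hFint.aestronglyMeasurable
    calc ∫ ω, g (X ω) (ε ω) * h (X ω) (η ω) ∂μ
        = ∫ z : ℝ × (ℝ × ℝ), g z.1 z.2.1 * h z.1 z.2.2
            ∂(μ.map (fun ω => (X ω, (ε ω, η ω)))) :=
          (integral_map (hXm.prodMk (hεm.prodMk hηm)).aemeasurable hFm).symm
      _ = ∫ z : ℝ × (ℝ × ℝ), g z.1 z.2.1 * h z.1 z.2.2 ∂π := by rw [mT]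
      _ = ∫ x, ∫ w : ℝ × ℝ, g x w.1 * h x w.2 ∂(νe.prod νn) ∂ν := integral_prod _ hFint
      _ = ∫ x, G x * H x ∂ν := by
          refine integral_congr_ae (ae_of_all _ fun x => ?_)
          exact integral_prod_mul (fun e => g x e) (fun n => h x n)
  have hEU : ∫ ω, g (X ω) (ε ω) ∂μ = ∫ x, G x ∂ν := by
    have hm : AEStronglyMeasurable (fun p : ℝ × ℝ => g p.1 p.2)
        (μ.map (fun ω => (X ω, ε ω))) := by
      rw [mXε]; exact hgInt.aestronglyMeasurable
    calc ∫ ω, g (X ω) (ε ω) ∂μ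
        = ∫ p : ℝ × ℝ, g p.1 p.2 ∂(μ.map (fun ω => (X ω, ε ω))) :=
          (integral_map (hXm.prodMk hεm).aemeasurable hm).symm
      _ = ∫ p : ℝ × ℝ, g p.1 p.2 ∂(ν.prod νe) := by rw [mXε]
      _ = ∫ x, ∫ e, g x e ∂νe ∂ν := integral_prod _ hgInt
  have hEV : ∫ ω, h (X ω) (η ω) ∂μ = ∫ x, H x ∂ν := by
    have hm : AEStronglyMeasurable (fun p : ℝ × ℝ => h p.1 p.2)
        (μ.map (fun ω => (X ω, η ω))) := by
      rw [mXη]; exact hhInt.aestronglyMeasurable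
    calc ∫ ω, h (X ω) (η ω) ∂μ
        = ∫ p : ℝ × ℝ, h p.1 p.2 ∂(μ.map (fun ω => (X ω, η ω))) :=
          (integral_map (hXm.prodMk hηm).aemeasurable hm).symm
      _ = ∫ p : ℝ × ℝ, h p.1 p.2 ∂(ν.prod νn) := by rw [mXη]
      _ = ∫ x, ∫ n, h x n ∂νn ∂ν := integral_prod _ hhInt
  -- a.e. integrability of the sections
  have hgae : ∀ᵐ x ∂ν, Integrable (fun e => g x e) νe := hgInt.prod_right_ae
  have hhae : ∀ᵐ x ∂ν, Integrable (fun n => h x n) νn := hhInt.prod_right_ae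
  have hQ : ∀ᵐ x ∂ν, Integrable (fun e => g x e) νe ∧ Integrable (fun n => h x n) νn :=
    hgae.and hhae
  have hQ1 : ∀ᵐ z : ℝ × ℝ ∂ν.prod ν,
      Integrable (fun e => g z.1 e) νe ∧ Integrable (fun n => h z.1 n) νn :=
    MeasureTheory.Measure.quasiMeasurePreserving_fst.ae hQ
  have hQ2 : ∀ᵐ z : ℝ × ℝ ∂ν.prod ν,
      Integrable (fun e => g z.2 e) νe ∧ Integrable (fun n => h z.2 n) νn :=
    MeasureTheory.Measure.quasiMeasurePreserving_snd.ae hQ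
  -- the pointwise sign inequality
  have hsign : ∀ᵐ z : ℝ × ℝ ∂ν.prod ν, (G z.1 - G z.2) * (H z.1 - H z.2) ≤ 0 := by
    filter_upwards [hQ1, hQ2] with z h1 h2
    rcases le_total z.1 z.2 with hle | hle
    · apply mul_nonpos_of_nonpos_of_nonneg
      · exact sub_nonpos.mpr (integral_mono h1.1 h2.1 fun e => hgmono e hle)
      · exact sub_nonneg.mpr (integral_mono h2.2 h1.2 fun n => hhmono n hle)
    · apply mul_nonpos_of_nonneg_of_nonpos
      · exact sub_nonneg.mpr (integral_mono h2.1 h1.1 fun e => hgmono e hle)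
      · exact sub_nonpos.mpr (integral_mono h1.2 h2.2 fun n => hhmono n hle)
  -- integrability of the pieces over the product of two copies
  have t1 : Integrable (fun z : ℝ × ℝ => G z.1 * H z.1) (ν.prod ν) := by
    have := hGH.mul_prod (integrable_const (μ := ν) (1 : ℝ))
    simpa using this
  have t4 : Integrable (fun z : ℝ × ℝ => G z.2 * H z.2) (ν.prod ν) := by
    have := (integrable_const (μ := ν) (1 : ℝ)).mul_prod hGH
    simpa using this
  have t2 : Integrable (fun z : ℝ × ℝ => G z.1 * H z.2) (ν.prod ν) :=
    hGint.mul_prod hHint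
  have t3 : Integrable (fun z : ℝ × ℝ => G z.2 * H z.1) (ν.prod ν) := by
    have := hHint.mul_prod hGint
    simpa [mul_comm] using this
  -- values of the four integrals
  have i1 : ∫ z : ℝ × ℝ, G z.1 * H z.1 ∂(ν.prod ν) = ∫ x, G x * H x ∂ν := by
    rw [integral_prod _ t1]
    simp
  have i4 : ∫ z : ℝ × ℝ, G z.2 * H z.2 ∂(ν.prod ν) = ∫ x, G x * H x ∂ν := by
    rw [integral_prod _ t4]
    simp
  have i2 : ∫ z : ℝ × ℝ, G z.1 * H z.2 ∂(ν.prod ν) = (∫ x, G x ∂ν) * ∫ x, H x ∂ν :=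
    integral_prod_mul G H
  have i3 : ∫ z : ℝ × ℝ, G z.2 * H z.1 ∂(ν.prod ν) = (∫ x, G x ∂ν) * ∫ x, H x ∂ν := by
    have h0 : ∫ z : ℝ × ℝ, H z.1 * G z.2 ∂(ν.prod ν) = (∫ x, H x ∂ν) * ∫ x, G x ∂ν :=
      integral_prod_mul H G
    rw [show (∫ x, G x ∂ν) * ∫ x, H x ∂ν = (∫ x, H x ∂ν) * ∫ x, G x ∂ν from mul_comm _ _,
      ← h0]
    refine integral_congr_ae (ae_of_all _ fun z => ?_)
    ring
  have key : ∫ z : ℝ × ℝ, (G z.1 - G z.2) * (H z.1 - H z.2) ∂(ν.prod ν) ≤ 0 :=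
    integral_nonpos_of_ae hsign
  have expand : ∫ z : ℝ × ℝ, (G z.1 - G z.2) * (H z.1 - H z.2) ∂(ν.prod ν)
      = ((∫ x, G x * H x ∂ν) + ∫ x, G x * H x ∂ν)
        - (((∫ x, G x ∂ν) * ∫ x, H x ∂ν) + (∫ x, G x ∂ν) * ∫ x, H x ∂ν) := by
    have heq : (fun z : ℝ × ℝ => (G z.1 - G z.2) * (H z.1 - H z.2))
        = fun z : ℝ × ℝ => (G z.1 * H z.1 + G z.2 * H z.2)
            - (G z.1 * H z.2 + G z.2 * H z.1) := by
      funext z; ring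
    have ta : Integrable (fun z : ℝ × ℝ => G z.1 * H z.1 + G z.2 * H z.2) (ν.prod ν) :=
      t1.add t4
    have tb : Integrable (fun z : ℝ × ℝ => G z.1 * H z.2 + G z.2 * H z.1) (ν.prod ν) :=
      t2.add t3
    calc ∫ z : ℝ × ℝ, (G z.1 - G z.2) * (H z.1 - H z.2) ∂(ν.prod ν)
        = ∫ z : ℝ × ℝ, ((G z.1 * H z.1 + G z.2 * H z.2)
            - (G z.1 * H z.2 + G z.2 * H z.1)) ∂(ν.prod ν) := by
          refine integral_congr_ae (ae_of_all _ fun z => ?_); ring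
      _ = (∫ z : ℝ × ℝ, (G z.1 * H z.1 + G z.2 * H z.2) ∂(ν.prod ν))
            - ∫ z : ℝ × ℝ, (G z.1 * H z.2 + G z.2 * H z.1) ∂(ν.prod ν) :=
          integral_sub ta tb
      _ = ((∫ x, G x * H x ∂ν) + ∫ x, G x * H x ∂ν)
            - (((∫ x, G x ∂ν) * ∫ x, H x ∂ν) + (∫ x, G x ∂ν) * ∫ x, H x ∂ν) := by
          rw [integral_add t1 t4, integral_add t2 t3, i1, i4, i2, i3]
  rw [expand] at key
  simp only [cov, hEUV, hEU, hEV]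
  linarith

end
end

section
/- Sign reversal of the IV estimand under misspecification: in the setting of the adversarial construction (Y = α + θD + X^Tπ + g·f̃(X) + ε, ε independent of (D,X), Var(f_⊥) > 0, Cov(D, f_⊥) ≠ 0), for any θ > 0 one can choose g ∈ R such that the IV estimand θ_IV = Cov(Y, f_⊥)/Cov(D, f_⊥) is strictly negative; specifically g = −2θ·Cov(D, f_⊥)/Var(f_⊥) yields θ_IV = −θ. -/
open MeasureTheory ProbabilityTheory

noncomputable section

/-- product of two L² functions is integrable (polarization trick). -/
lemma memL2_integrable_mul {Ω : Type*} [MeasurableSpace Ω] {μ : Measure Ω}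
    {u v : Ω → ℝ} (hu : MemLp u 2 μ) (hv : MemLp v 2 μ) :
    Integrable (fun ω => u ω * v ω) μ := by
  have h : Integrable (fun ω => (((u ω + v ω) ^ 2 - u ω ^ 2) - v ω ^ 2) / 2) μ :=
    (((hu.add hv).integrable_sq.sub hu.integrable_sq).sub hv.integrable_sq).div_const 2
  have heq : (fun ω => u ω * v ω)
      = fun ω => (((u ω + v ω) ^ 2 - u ω ^ 2) - v ω ^ 2) / 2 := by
    funext ω; ring
  rw [heq]; exact h

/-- sign reversal under misspecification: for any `θ > 0`, the
choice `g = −2θ·Cov(D, f_⊥)/Var(f_⊥)` in the adversarial DGP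
`Y = α + θD + Xᵀπ + g·f̃(X) + ε` yields `θ_IV = −θ < 0`. -/
theorem stmt18 {Ω : Type*} [MeasurableSpace Ω] (μ : Measure Ω) [IsProbabilityMeasure μ]
    {J : ℕ} (X : Ω → Fin (J + 1) → ℝ) (hconst : ∀ ω, X ω 0 = 1)
    (Y D ε : Ω → ℝ) (f : (Fin (J + 1) → ℝ) → ℝ)
    (hXm : Measurable X) (hfm : Measurable f)
    (hX2 : ∀ j, MemLp (fun ω => X ω j) 2 μ)
    (hf2 : MemLp (fun ω => f (X ω)) 2 μ)
    (hD2 : MemLp D 2 μ) (hε2 : MemLp ε 2 μ)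
    (hM : (gram μ X).det ≠ 0)
    (fperp : Ω → ℝ) (hfperp : fperp = resid μ X fun ω => f (X ω))
    (hvar : 0 < variance fperp μ)
    (hrel : cov μ D fperp ≠ 0)
    (hindep : IndepFun ε (fun ω => (D ω, X ω)) μ)
    (θ α : ℝ) (hθ : 0 < θ) (π : Fin (J + 1) → ℝ)
    (g : ℝ) (hg : g = -2 * θ * cov μ D fperp / variance fperp μ)
    (hY : ∀ ω, Y ω = α + θ * D ω + (∑ j, π j * X ω j) + g * f (X ω) + ε ω) :
    cov μ Y fperp / cov μ D fperp = -θ ∧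
    cov μ Y fperp / cov μ D fperp < 0 := by
  classical
  set F : Ω → ℝ := fun ω => f (X ω) with hF
  set c : Fin (J + 1) → ℝ := projCoef μ X F with hc
  -- fperp is in L²
  have hsum2 : MemLp (fun ω => ∑ j, X ω j * c j) 2 μ := by
    have h : ∀ j ∈ Finset.univ, MemLp (fun ω => c j * X ω j) 2 μ :=
      fun j _ => (hX2 j).const_mul (c j)
    have h2 := memLp_finset_sum' (μ := μ) Finset.univ h
    have heq : (∑ j : Fin (J + 1), fun ω => c j * X ω j)
        = fun ω => ∑ j, X ω j * c j := by
      funext ω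
      simp [Finset.sum_apply, mul_comm]
    rwa [heq] at h2
  have hfperp2 : MemLp fperp 2 μ := by
    rw [hfperp]
    exact hf2.sub hsum2
  -- integrability of various products
  have hXF : ∀ i, Integrable (fun ω => X ω i * F ω) μ :=
    fun i => memL2_integrable_mul (hX2 i) hf2
  have hXX : ∀ i j, Integrable (fun ω => X ω i * X ω j) μ :=
    fun i j => memL2_integrable_mul (hX2 i) (hX2 j)
  have hXfp : ∀ i, Integrable (fun ω => X ω i * fperp ω) μ :=
    fun i => memL2_integrable_mul (hX2 i) hfperp2
  have hDfp : Integrable (fun ω => D ω * fperp ω) μ := memL2_integrable_mul hD2 hfperp2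
  have hFfp : Integrable (fun ω => F ω * fperp ω) μ := memL2_integrable_mul hf2 hfperp2
  have hεfp : Integrable (fun ω => ε ω * fperp ω) μ := memL2_integrable_mul hε2 hfperp2
  have hfp2 : Integrable (fun ω => fperp ω * fperp ω) μ :=
    memL2_integrable_mul hfperp2 hfperp2
  have hfpI : Integrable fperp μ := hfperp2.integrable one_le_two
  -- orthogonality: ∫ X_i · fperp = 0
  have hoX : ∀ i, (∫ ω, X ω i * fperp ω ∂μ) = 0 := by
    intro i
    have heq : (fun ω => X ω i * fperp ω)
        = fun ω => X ω i * F ω - ∑ j, X ω i * X ω j * c j := by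
      funext ω
      rw [hfperp]
      simp only [resid, mul_sub, Finset.mul_sum]
      congr 1
      exact Finset.sum_congr rfl fun j _ => by ring
    rw [heq, integral_sub (hXF i)]
    · rw [integral_finset_sum]
      · have hterm : ∀ j, (∫ ω, X ω i * X ω j * c j ∂μ)
            = gram μ X i j * c j := fun j => by
          rw [integral_mul_const]; rfl
        simp only [hterm]
        have hmv : (gram μ X).mulVec c = fun i => ∫ ω, X ω i * F ω ∂μ := by
          rw [hc, projCoef, Matrix.mulVec_mulVec, Matrix.mul_nonsing_inv _ (isUnit_iff_ne_zero.mpr hM),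
            Matrix.one_mulVec]
        have : ∑ j, gram μ X i j * c j = (gram μ X).mulVec c i := rfl
        rw [this, hmv]
        ring
      · exact fun j _ => (hXX i j).mul_const (c j)
    · exact integrable_finset_sum _ fun j _ => (hXX i j).mul_const (c j)
  -- zero mean
  have hmean : (∫ ω, fperp ω ∂μ) = 0 := by
    have := hoX 0
    simpa [hconst] using this
  -- variance = ∫ fperp²
  have hvar' : variance fperp μ = ∫ ω, fperp ω * fperp ω ∂μ := by
    rw [variance_eq_sub hfperp2]
    have h1 : (μ[fperp] : ℝ) = 0 := hmean
    have h2 : (μ[fperp ^ 2] : ℝ) = ∫ ω, fperp ω * fperp ω ∂μ := by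
      apply integral_congr_ae
      filter_upwards with ω
      simp [pow_two]
    rw [h1, h2]
    ring
  -- ∫ F·fperp = ∫ fperp²
  have hFf : (∫ ω, F ω * fperp ω ∂μ) = ∫ ω, fperp ω * fperp ω ∂μ := by
    have heq : (fun ω => F ω * fperp ω)
        = fun ω => fperp ω * fperp ω + ∑ j, X ω j * fperp ω * c j := by
      funext ω
      have : F ω = fperp ω + ∑ j, X ω j * c j := by
        rw [hfperp]; simp [resid, hc]
      rw [this, add_mul, Finset.sum_mul]
      congr 1
      exact Finset.sum_congr rfl fun j _ => by ring
    rw [heq, integral_add hfp2]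
    · rw [integral_finset_sum]
      · simp only [integral_mul_const, hoX, zero_mul, Finset.sum_const_zero, add_zero]
      · exact fun j _ => (hXfp j).mul_const (c j)
    · exact integrable_finset_sum _ fun j _ => (hXfp j).mul_const (c j)
  -- independence: ∫ ε·fperp = 0
  have hεf : (∫ ω, ε ω * fperp ω ∂μ) = 0 := by
    have hφ : Measurable fun p : ℝ × (Fin (J + 1) → ℝ) => f p.2 - ∑ j, p.2 j * c j := by
      apply Measurable.sub (hfm.comp measurable_snd)
      exact Finset.measurable_sum _ fun j _ =>
        (((measurable_pi_apply j).comp measurable_snd :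
          Measurable fun p : ℝ × (Fin (J + 1) → ℝ) => p.2 j)).mul_const (c j)
    have hind2 : IndepFun ε fperp μ := by
      have := hindep.comp measurable_id hφ
      have hfe : fperp = (fun p : ℝ × (Fin (J + 1) → ℝ) => f p.2 - ∑ j, p.2 j * c j) ∘
          (fun ω => (D ω, X ω)) := by
        funext ω; rw [hfperp]; rfl
      rw [hfe]
      exact this
    have := hind2.integral_mul_eq_mul_integral hε2.aestronglyMeasurable hfperp2.aestronglyMeasurable
    rw [show (∫ ω, ε ω * fperp ω ∂μ) = μ[ε * fperp] from rfl, this, hmean, mul_zero]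
  -- expand cov(Y, fperp)
  have hcD : cov μ D fperp = ∫ ω, D ω * fperp ω ∂μ := by
    rw [cov, hmean, mul_zero, sub_zero]
  have hcY : cov μ Y fperp = θ * cov μ D fperp + g * variance fperp μ := by
    rw [cov, hmean, mul_zero, sub_zero]
    have heq : (fun ω => Y ω * fperp ω)
        = fun ω => α * fperp ω + θ * (D ω * fperp ω) + (∑ j, X ω j * fperp ω * π j)
            + g * (F ω * fperp ω) + ε ω * fperp ω := by
      funext ω
      have hs : (∑ j, π j * X ω j) * fperp ω = ∑ j, X ω j * fperp ω * π j := by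
        rw [Finset.sum_mul]
        exact Finset.sum_congr rfl fun j _ => by ring
      rw [hY ω, ← hs]
      ring
    have hint3 : Integrable (fun ω => ∑ j, X ω j * fperp ω * π j) μ :=
      integrable_finset_sum _ fun j _ => (hXfp j).mul_const (π j)
    have hA1 : Integrable (fun ω => α * fperp ω + θ * (D ω * fperp ω)) μ :=
      (hfpI.const_mul α).add (hDfp.const_mul θ)
    have hA2 : Integrable (fun ω => α * fperp ω + θ * (D ω * fperp ω)
        + ∑ j, X ω j * fperp ω * π j) μ := hA1.add hint3
    have hA3 : Integrable (fun ω => α * fperp ω + θ * (D ω * fperp ω)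
        + (∑ j, X ω j * fperp ω * π j) + g * (F ω * fperp ω)) μ :=
      hA2.add (hFfp.const_mul g)
    rw [heq, integral_add hA3 hεfp, integral_add hA2 (hFfp.const_mul g),
      integral_add hA1 hint3, integral_add (hfpI.const_mul α) (hDfp.const_mul θ),
      integral_const_mul, integral_const_mul, integral_const_mul, hmean, mul_zero,
      integral_finset_sum _ (fun j _ => (hXfp j).mul_const (π j))]
    simp only [integral_mul_const, hoX, zero_mul, Finset.sum_const_zero]
    rw [hεf, hFf, ← hvar', hcD]
    ring
  -- conclude
  have hkey : cov μ Y fperp = -θ * cov μ D fperp := by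
    rw [hcY, hg]
    field_simp
    ring
  constructor
  · rw [hkey, neg_mul, neg_div, mul_div_assoc, div_self hrel, mul_one]
  · rw [hkey, neg_mul, neg_div, mul_div_assoc, div_self hrel, mul_one]
    linarith

end
end
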